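/- Let γ, E₁, E₂, x ∈ ℝ³ with D := ⟨x−γ, γ−E₁⟩ + ‖x−γ‖(‖x−γ‖+‖x−E₂‖) > 0, and let c := N/(2D) where N := (‖x−γ‖+‖x−E₂‖)² − ‖γ−E₁‖². Then c = 1 if and only if ‖x−E₁‖ = ‖x−E₂‖; that is, the fixed locus of the artifact map corresponds exactly to the plane π of points equidistant from the two emitters E₁ and E₂. -/

import Mathlib

theorem stmt_5 (γ E₁ E₂ x : EuclideanSpace ℝ (Fin 3))
    (N D c : ℝ)
    (hN : N = (‖x - γ‖ + ‖x - E₂‖) ^ 2 - ‖γ - E₁‖ ^ 2)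
    (hD : D = (inner ℝ (x - γ) (γ - E₁) : ℝ) + ‖x - γ‖ * (‖x - γ‖ + ‖x - E₂‖))
    (hDpos : 0 < D) (hc : c = N / (2 * D)) :
    c = 1 ↔ ‖x - E₁‖ = ‖x - E₂‖ := by
  have key : ‖x - E₁‖ ^ 2 =
      ‖x - γ‖ ^ 2 + 2 * (inner ℝ (x - γ) (γ - E₁) : ℝ) + ‖γ - E₁‖ ^ 2 := by
    have h : x - E₁ = (x - γ) + (γ - E₁) := by abel
    rw [h, norm_add_sq_real]
  have h2 : (2 : ℝ) * D ≠ 0 := by positivity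
  rw [hc, div_eq_one_iff_eq h2]
  constructor
  · intro h
    have hsq : ‖x - E₁‖ ^ 2 = ‖x - E₂‖ ^ 2 := by nlinarith [key, hN, hD, h]
    exact pow_left_inj₀ (norm_nonneg _) (norm_nonneg _) two_ne_zero |>.mp hsq
  · intro h
    rw [h] at key
    nlinarith [key, hN, hD]
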